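/- Let n ≥ 3, let T be a traceless symmetric endomorphism of ℝⁿ that is diagonal in the standard basis with diagonal entries λ_1,…,λ_n, set σ := tr(T²)/n and R := (2/(n−2))·(T∧id). Then for every pair i < j, the vector e_i∧e_j is an eigenvector of R² + R^# with eigenvalue λ_i·λ_j/(n−2) + (n·σ − λ_i² − λ_j²)/(n−2)². -/

import Mathlib

/-!
Common setup: we identify ⋀²ℝⁿ with the Lie algebra `so n` of real skew-symmetric
`n × n` matrices, sending `eᵢ ∧ eⱼ` to the rotation by `π/2` in the plane spanned by
`eᵢ, eⱼ`; the inner product on `so n` is `⟪A, B⟫ = -(1/2)·tr (A * B)`, and under this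
identification `v ∧ w` corresponds to the skew-symmetric matrix `v wᵀ - w vᵀ`, while
the wedge `A ∧ B` of two endomorphisms of `ℝⁿ` acts on a skew matrix `M` by
`M ↦ (1/2)(A M Bᵀ + B M Aᵀ)` (the unique linear extension of
`v∧w ↦ (1/2)(Av ∧ Bw + Bv ∧ Aw)`).
-/

noncomputable section

namespace BW

open Matrix

abbrev Mat (n : ℕ) := Matrix (Fin n) (Fin n) ℝ

/-- `so n`: the space of real skew-symmetric `n × n` matrices (≅ ⋀²ℝⁿ). -/
def so (n : ℕ) : Submodule ℝ (Mat n) where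
  carrier := {A | Aᵀ = -A}
  add_mem' := by
    intro A B hA hB
    simp only [Set.mem_setOf_eq] at *
    rw [Matrix.transpose_add, hA, hB, neg_add]
  zero_mem' := by simp
  smul_mem' := by
    intro c A hA
    simp only [Set.mem_setOf_eq] at *
    rw [Matrix.transpose_smul, hA, smul_neg]

variable {n : ℕ}

lemma mem_so_iff {A : Mat n} : A ∈ so n ↔ Aᵀ = -A := Iff.rfl

/-- The inner product `⟨A,B⟩ = -(1/2)·tr(AB)` on `so n`. -/
def ip (A B : so n) : ℝ := -(1/2) * Matrix.trace ((A : Mat n) * (B : Mat n))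

/-- `ip` as a linear map in the second variable. -/
def ipL (A : so n) : so n →ₗ[ℝ] ℝ where
  toFun B := ip A B
  map_add' B C := by
    simp only [ip, Submodule.coe_add, Matrix.mul_add, Matrix.trace_add]; ring
  map_smul' c B := by
    simp only [ip, SetLike.val_smul, Matrix.mul_smul, Matrix.trace_smul, smul_eq_mul,
      RingHom.id_apply]; ring

/-- The Lie bracket (matrix commutator) on `so n`. -/
def brk (A B : so n) : so n :=
  ⟨(A : Mat n) * (B : Mat n) - (B : Mat n) * (A : Mat n), by
    have hA : (A : Mat n)ᵀ = -(A : Mat n) := A.2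
    have hB : (B : Mat n)ᵀ = -(B : Mat n) := B.2
    rw [mem_so_iff, Matrix.transpose_sub, Matrix.transpose_mul, Matrix.transpose_mul, hA, hB]
    noncomm_ring⟩

/-- Auxiliary linear map underlying `A ∧ B`. -/
def wedgeAux (A B : Mat n) : Mat n →ₗ[ℝ] Mat n where
  toFun M := (1/2 : ℝ) • (A * M * Bᵀ + B * M * Aᵀ)
  map_add' M N := by
    simp only [mul_add, add_mul, smul_add]
    module
  map_smul' c M := by
    simp only [mul_smul_comm, smul_mul_assoc, RingHom.id_apply]
    module

lemma wedgeAux_mem (A B : Mat n) : ∀ M ∈ so n, wedgeAux A B M ∈ so n := by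
  intro M hM
  rw [mem_so_iff] at hM ⊢
  show ((1/2 : ℝ) • (A * M * Bᵀ + B * M * Aᵀ))ᵀ = -((1/2 : ℝ) • (A * M * Bᵀ + B * M * Aᵀ))
  rw [Matrix.transpose_smul, Matrix.transpose_add, Matrix.transpose_mul, Matrix.transpose_mul,
    Matrix.transpose_mul, Matrix.transpose_mul, Matrix.transpose_transpose,
    Matrix.transpose_transpose, hM]
  simp only [Matrix.neg_mul, Matrix.mul_neg, Matrix.mul_assoc, smul_neg, neg_add, smul_add]
  abel

/-- The wedge `A ∧ B` of two endomorphisms of ℝⁿ, as an endomorphism of `so n ≅ ⋀²ℝⁿ`: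
the unique linear map with `(A ∧ B)(v ∧ w) = (1/2)(Av ∧ Bw + Bv ∧ Aw)`. -/
def wedge (A B : Mat n) : Module.End ℝ (so n) :=
  (wedgeAux A B).restrict (p := so n) (q := so n) (wedgeAux_mem A B)

/-- The index set of pairs `i < j`. -/
def pairs (n : ℕ) : Finset (Fin n × Fin n) := Finset.univ.filter fun p => p.1 < p.2

/-- The standard basis vector `eᵢ` of ℝⁿ. -/
def evec (i : Fin n) : Fin n → ℝ := fun k => if k = i then 1 else 0

/-- `v ∧ w`, as an element of `so n ≅ ⋀²ℝⁿ`. -/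
def vwedge (v w : Fin n → ℝ) : so n :=
  ⟨Matrix.of fun i j => v i * w j - w i * v j, by
    rw [mem_so_iff]
    ext i j
    simp only [Matrix.transpose_apply, Matrix.of_apply, Matrix.neg_apply]
    ring⟩

/-- The orthonormal basis vector `eᵢ ∧ eⱼ` of `so n ≅ ⋀²ℝⁿ`. -/
def bvec (i j : Fin n) : so n := vwedge (evec i) (evec j)

/-- Hamilton's sharp product `R # S`: the self-adjoint endomorphism of `so n` determined by
`⟨(R#S)h, h⟩ = (1/2)·Σ_{α,β} ⟨[R(b_α), S(b_β)], h⟩·⟨[b_α, b_β], h⟩`,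
where `(b_α)` is the orthonormal basis `(eᵢ ∧ eⱼ)_{i<j}` of `so n`. -/
def sharp (R S : Module.End ℝ (so n)) : Module.End ℝ (so n) :=
  (1/4 : ℝ) • ∑ p ∈ pairs n, ∑ q ∈ pairs n,
    ((ipL (brk (R (bvec p.1 p.2)) (S (bvec q.1 q.2)))).smulRight
        (brk (bvec p.1 p.2) (bvec q.1 q.2))
      + (ipL (brk (bvec p.1 p.2) (bvec q.1 q.2))).smulRight
        (brk (R (bvec p.1 p.2)) (S (bvec q.1 q.2))))

/-- The right-hand side `R² + R^#` of Hamilton's ODE. -/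
def Qode (R : Module.End ℝ (so n)) : Module.End ℝ (so n) := R * R + sharp R R

/-- The coordinates `R_{ijkl} = ⟨R(eᵢ∧eⱼ), e_k∧e_l⟩` of an endomorphism of `so n`. -/
def Rcoord (R : Module.End ℝ (so n)) (i j k l : Fin n) : ℝ := ip (R (bvec i j)) (bvec k l)

/-- Self-adjointness with respect to the inner product `ip`. -/
def selfAdjEnd (R : Module.End ℝ (so n)) : Prop := ∀ X Y : so n, ip (R X) Y = ip X (R Y)

/-- A curvature operator: a self-adjoint endomorphism of `so n ≅ ⋀²ℝⁿ` satisfying the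
first Bianchi identity.  (`isCurvOp` carves out `S²_B(so n)`.) -/
def isCurvOp (R : Module.End ℝ (so n)) : Prop :=
  selfAdjEnd R ∧
    ∀ i j k l : Fin n, Rcoord R i j k l + Rcoord R j k i l + Rcoord R k i j l = 0

/-- The Ricci tensor `Ric_{ij} = Σ_k R_{ikjk}` of `R`. -/
def RicM (R : Module.End ℝ (so n)) : Mat n := Matrix.of fun i j => ∑ k, Rcoord R i k j k

/-- `λ̄ = tr(Ric)/n`. -/
def lamb (R : Module.End ℝ (so n)) : ℝ := Matrix.trace (RicM R) / (n : ℝ)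

/-- The traceless Ricci tensor `Ric₀ = Ric - (tr Ric / n)·id`. -/
def Ric0 (R : Module.End ℝ (so n)) : Mat n := RicM R - lamb R • (1 : Mat n)

/-- `σ = tr(Ric₀²)/n`. -/
def sigmaR (R : Module.End ℝ (so n)) : ℝ := Matrix.trace (Ric0 R * Ric0 R) / (n : ℝ)

/-- `R_I = (λ̄/(n-1))·(id ∧ id)`, the projection of `R` onto `⟨I⟩`. -/
def RI (R : Module.End ℝ (so n)) : Module.End ℝ (so n) :=
  (lamb R / ((n : ℝ) - 1)) • wedge (1 : Mat n) (1 : Mat n)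

/-- `R_{Ric₀} = (2/(n-2))·(Ric₀ ∧ id)`, the projection of `R` onto `⟨Ric₀⟩`. -/
def RRic0 (R : Module.End ℝ (so n)) : Module.End ℝ (so n) :=
  (2 / ((n : ℝ) - 2)) • wedge (Ric0 R) (1 : Mat n)

/-- The linear map `ℓ_{a,b}(R) = R + 2(n-1)a·R_I + (n-2)b·R_{Ric₀}`. -/
def lab (a b : ℝ) (R : Module.End ℝ (so n)) : Module.End ℝ (so n) :=
  R + (2 * ((n : ℝ) - 1) * a) • RI R + (((n : ℝ) - 2) * b) • RRic0 R

/-- Positive semidefiniteness of the quadratic form of an endomorphism of `so n`. -/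
def posSemidefEnd (R : Module.End ℝ (so n)) : Prop := ∀ X : so n, 0 ≤ ip (R X) X

/-- Positive definiteness of the quadratic form of an endomorphism of `so n`. -/
def posDefEnd (R : Module.End ℝ (so n)) : Prop := ∀ X : so n, X ≠ 0 → 0 < ip (R X) X

/-- `R` is 2-nonnegative: the sum of its two smallest eigenvalues is nonnegative;
equivalently (Ky Fan), `q_R(X) + q_R(Y) ≥ 0` for all orthonormal pairs `X, Y`. -/
def twoNonneg (R : Module.End ℝ (so n)) : Prop :=
  ∀ X Y : so n, ip X X = 1 → ip Y Y = 1 → ip X Y = 0 → 0 ≤ ip (R X) X + ip (R Y) Y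

/-- The (Frobenius) norm of an endomorphism of `so n`, computed in the orthonormal
basis `(eᵢ ∧ eⱼ)_{i<j}`. -/
def endNorm (R : Module.End ℝ (so n)) : ℝ :=
  Real.sqrt (∑ p ∈ pairs n, ip (R (bvec p.1 p.2)) (R (bvec p.1 p.2)))

/-- The tangent cone `T_R C`: the closure of `{t·(S - R) : S ∈ C, t ≥ 0}`. -/
def tangCone (C : Set (Module.End ℝ (so n))) (R : Module.End ℝ (so n)) :
    Set (Module.End ℝ (so n)) :=
  {X | ∀ ε > 0, ∃ S ∈ C, ∃ t : ℝ, 0 ≤ t ∧ endNorm (X - t • (S - R)) < ε}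

/-- `C` is a closed subset of the space of endomorphisms of `so n`. -/
def isClosedSet (C : Set (Module.End ℝ (so n))) : Prop :=
  ∀ X, (∀ ε > 0, ∃ Y ∈ C, endNorm (X - Y) < ε) → X ∈ C

/-- The interior of `C` relative to the subspace `S²_B(so n)` of curvature operators. -/
def interiorCurv (C : Set (Module.End ℝ (so n))) : Set (Module.End ℝ (so n)) :=
  {X | isCurvOp X ∧ ∃ ε > 0, ∀ Y, isCurvOp Y → endNorm (Y - X) < ε → Y ∈ C}

/-- Auxiliary linear map `M ↦ g M gᵀ` on matrices. -/
def conjAux (g : Mat n) : Mat n →ₗ[ℝ] Mat n where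
  toFun M := g * M * gᵀ
  map_add' M N := by simp only [mul_add, add_mul]
  map_smul' c M := by simp only [mul_smul_comm, smul_mul_assoc, RingHom.id_apply]

/-- `⋀²g` : the action `M ↦ g M gᵀ` of `g` on `so n ≅ ⋀²ℝⁿ` (for `g` orthogonal this is
the second exterior power of `g`). -/
def conjSo (g : Mat n) : Module.End ℝ (so n) :=
  (conjAux g).restrict (p := so n) (q := so n) (fun M hM => by
    rw [mem_so_iff] at hM ⊢
    show (g * M * gᵀ)ᵀ = -(g * M * gᵀ)
    rw [Matrix.transpose_mul, Matrix.transpose_mul, Matrix.transpose_transpose, hM]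
    simp only [Matrix.neg_mul, Matrix.mul_neg, Matrix.mul_assoc])

/-- The action `g · R = (⋀²g) ∘ R ∘ (⋀²g)⁻¹` of an orthogonal matrix `g`
(whose inverse is `gᵀ`) on endomorphisms of `so n`. -/
def onAct (g : Mat n) (R : Module.End ℝ (so n)) : Module.End ℝ (so n) :=
  conjSo g * R * conjSo gᵀ

/-- Two sets are at Hausdorff distance at most `ε` from each other. -/
def hdClose (A B : Set (Module.End ℝ (so n))) (ε : ℝ) : Prop :=
  (∀ X ∈ A, ∃ Y ∈ B, endNorm (X - Y) ≤ ε) ∧ ∀ Y ∈ B, ∃ X ∈ A, endNorm (X - Y) ≤ ε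

/-- The truncation `C ∩ {‖R‖ ≤ 1}`. -/
def truncSet (C : Set (Module.End ℝ (so n))) : Set (Module.End ℝ (so n)) :=
  {R ∈ C | endNorm R ≤ 1}


variable {n : ℕ}

lemma bvec_apply (i j x y : Fin n) :
    ((bvec i j : so n) : Mat n) x y =
      (if x = i then (1:ℝ) else 0) * (if y = j then 1 else 0) -
        (if x = j then (1:ℝ) else 0) * (if y = i then 1 else 0) := rfl

lemma bvec_self (i : Fin n) : bvec i i = 0 := by
  apply Subtype.ext
  ext x y
  simp [bvec_apply]


lemma bvec_swap (i j : Fin n) : bvec j i = -bvec i j := by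
  apply Subtype.ext
  ext x y
  show _ = -((bvec i j : so n) : Mat n) x y
  simp [bvec_apply]


lemma brk_smul_smul (r s : ℝ) (X Y : so n) : brk (r • X) (s • Y) = (r * s) • brk X Y := by
  apply Subtype.ext
  show (r • (X:Mat n)) * (s • (Y:Mat n)) - (s • (Y:Mat n)) * (r • (X:Mat n)) = (r*s) • ((X:Mat n) * Y - (Y:Mat n) * X)
  simp [smul_smul, Matrix.smul_mul, Matrix.mul_smul, mul_comm, smul_sub]

lemma ip_smul_left (r : ℝ) (X Y : so n) : ip (r • X) Y = r * ip X Y := by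
  simp [ip, Matrix.smul_mul]
  ring

/-- shorthand -/
def stdE (i j : Fin n) : Mat n := Matrix.single i j 1

lemma ite_one_mul (p q : Prop) [Decidable p] [Decidable q] :
    (if p then (1:ℝ) else 0) * (if q then 1 else 0) = if p ∧ q then 1 else 0 := by
  split_ifs with h1 h2 h3 <;> simp_all

lemma bvec_coe (i j : Fin n) : ((bvec i j : so n) : Mat n) = stdE i j - stdE j i := by
  ext x y
  simp only [bvec_apply, stdE, Matrix.single, Matrix.sub_apply, Matrix.of_apply,
    ite_one_mul]
  have e1 : (x = i ∧ y = j) ↔ (i = x ∧ j = y) := by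
    constructor <;> rintro ⟨rfl, rfl⟩ <;> exact ⟨rfl, rfl⟩
  have e2 : (x = j ∧ y = i) ↔ (j = x ∧ i = y) := by
    constructor <;> rintro ⟨rfl, rfl⟩ <;> exact ⟨rfl, rfl⟩
  rw [if_congr e1 rfl rfl, if_congr e2 rfl rfl]

lemma stdE_mul (i j k l : Fin n) :
    stdE i j * stdE k l = if j = k then stdE i l else (0 : Mat n) := by
  by_cases h : j = k
  · subst h
    simp [stdE, Matrix.single_mul_single_same]
  · simp [stdE, Matrix.single_mul_single_of_ne, h]

lemma stdE_trace (i j : Fin n) : Matrix.trace (stdE i j) = if i = j then (1:ℝ) else 0 := by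
  rw [Matrix.trace]
  have : ∀ k : Fin n, Matrix.diag (stdE i j) k = if i = k ∧ j = k then (1:ℝ) else 0 := by
    intro k; rfl
  simp only [this]
  by_cases h : i = j
  · subst h
    simp
  · rw [if_neg h]
    apply Finset.sum_eq_zero
    intro k _
    rw [if_neg]
    rintro ⟨rfl, rfl⟩
    exact h rfl
lemma bvec_mul (a b c d : Fin n) :
    ((bvec a b : so n) : Mat n) * ((bvec c d : so n) : Mat n) =
      (if b = c then stdE a d else 0) - (if b = d then stdE a c else 0)
        - (if a = c then stdE b d else 0) + (if a = d then stdE b c else 0) := by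
  rw [bvec_coe, bvec_coe, sub_mul, mul_sub, mul_sub, stdE_mul, stdE_mul, stdE_mul, stdE_mul]
  abel

lemma ip_bvec (a b c d : Fin n) :
    ip (bvec a b) (bvec c d) =
      (if a = c then (1:ℝ) else 0) * (if b = d then 1 else 0) -
        (if a = d then (1:ℝ) else 0) * (if b = c then 1 else 0) := by
  rw [ip, bvec_mul, Matrix.trace_add, Matrix.trace_sub, Matrix.trace_sub,
    apply_ite Matrix.trace, apply_ite Matrix.trace, apply_ite Matrix.trace,
    apply_ite Matrix.trace, Matrix.trace_zero, stdE_trace, stdE_trace, stdE_trace, stdE_trace]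
  split_ifs <;> subst_vars <;> simp_all <;> ring

lemma ite_one_smul (p : Prop) [Decidable p] (M : Mat n) :
    (if p then (1:ℝ) else 0) • M = if p then M else 0 := by
  split_ifs <;> simp

lemma ite_sub_zero (p : Prop) [Decidable p] (X Y : Mat n) :
    (if p then X - Y else 0) = (if p then X else 0) - (if p then Y else 0) := by
  split_ifs <;> simp

lemma brk_bvec (a b c d : Fin n) :
    brk (bvec a b) (bvec c d) =
      (if b = c then (1:ℝ) else 0) • bvec a d + (if a = d then (1:ℝ) else 0) • bvec b c
        - (if b = d then (1:ℝ) else 0) • bvec a c - (if a = c then (1:ℝ) else 0) • bvec b d := by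
  apply Subtype.ext
  have lhs : ((brk (bvec a b) (bvec c d) : so n) : Mat n)
      = ((bvec a b : so n) : Mat n) * ((bvec c d : so n) : Mat n)
        - ((bvec c d : so n) : Mat n) * ((bvec a b : so n) : Mat n) := rfl
  rw [lhs, bvec_mul a b c d, bvec_mul c d a b]
  have rhs : (((if b = c then (1:ℝ) else 0) • bvec a d + (if a = d then (1:ℝ) else 0) • bvec b c
        - (if b = d then (1:ℝ) else 0) • bvec a c
        - (if a = c then (1:ℝ) else 0) • bvec b d : so n) : Mat n)
      = (if b = c then (1:ℝ) else 0) • ((bvec a d : so n) : Mat n)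
        + (if a = d then (1:ℝ) else 0) • ((bvec b c : so n) : Mat n)
        - (if b = d then (1:ℝ) else 0) • ((bvec a c : so n) : Mat n)
        - (if a = c then (1:ℝ) else 0) • ((bvec b d : so n) : Mat n) := rfl
  rw [rhs, bvec_coe a d, bvec_coe b c, bvec_coe a c, bvec_coe b d,
    ite_one_smul, ite_one_smul, ite_one_smul, ite_one_smul,
    if_congr (show (d = a) ↔ (a = d) from eq_comm) rfl rfl,
    if_congr (show (d = b) ↔ (b = d) from eq_comm) rfl rfl,
    if_congr (show (c = a) ↔ (a = c) from eq_comm) rfl rfl,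
    if_congr (show (c = b) ↔ (b = c) from eq_comm) rfl rfl,
    ite_sub_zero, ite_sub_zero, ite_sub_zero, ite_sub_zero]
  abel
lemma ip_add_left (X Y Z : so n) : ip (X + Y) Z = ip X Z + ip Y Z := by
  simp only [ip, Submodule.coe_add, Matrix.add_mul, Matrix.trace_add]; ring

lemma ip_sub_left (X Y Z : so n) : ip (X - Y) Z = ip X Z - ip Y Z := by
  simp only [ip, AddSubgroupClass.coe_sub, Matrix.sub_mul, Matrix.trace_sub]; ring

lemma ip_zero_left (Z : so n) : ip (0 : so n) Z = 0 := by
  simp [ip]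

lemma ip_ite_left (p : Prop) [Decidable p] (X Y Z : so n) :
    ip (if p then X else Y) Z = if p then ip X Z else ip Y Z :=
  apply_ite (fun W => ip W Z) p X Y
set_option maxHeartbeats 4000000 in
set_option maxRecDepth 8000 in
lemma quad_sum (ν : Fin n → Fin n → ℝ) (hν : ∀ a b, ν a b = ν b a) (i j : Fin n) (hij : i ≠ j) :
    ∑ a : Fin n, ∑ b : Fin n, ∑ c : Fin n, ∑ d : Fin n,
      (ν a b * ν c d * ip (brk (bvec a b) (bvec c d)) (bvec i j)) • brk (bvec a b) (bvec c d)
      = (8 * (∑ k, ν i k * ν j k) - 8 * (ν i i * ν i j) - 8 * (ν i j * ν j j)) • bvec i j := by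
  simp only [brk_bvec, ip_add_left, ip_sub_left, ip_smul_left, ip_ite_left, ip_zero_left,
    ip_bvec, one_smul, one_mul,
    smul_add, smul_sub, smul_smul, add_smul, sub_smul, mul_ite, ite_mul, mul_one,
    mul_zero, zero_mul, ite_smul, zero_smul, smul_ite, smul_zero, mul_add, mul_sub, add_mul,
    sub_mul, add_zero, zero_add, sub_zero, zero_sub, neg_smul, neg_neg,
    Finset.sum_neg_distrib,
    Finset.sum_add_distrib, Finset.sum_sub_distrib, Finset.sum_ite_irrel, Finset.sum_const_zero,
    Finset.sum_ite_eq, Finset.sum_ite_eq',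
    Finset.mem_univ, if_true]
  simp only [hij, Ne.symm hij, if_false]
  simp only [bvec_swap i j, smul_neg, sub_neg_eq_add, neg_neg]
  simp only [← Finset.sum_smul]
  simp only [Finset.sum_neg_distrib, ← Finset.sum_smul]
  have h1 : ∑ k : Fin n, ν i k * ν k j = ∑ k : Fin n, ν i k * ν j k :=
    Finset.sum_congr rfl fun k _ => by rw [hν k j]
  have h2 : ∑ k : Fin n, ν j k * ν k i = ∑ k : Fin n, ν i k * ν j k :=
    Finset.sum_congr rfl fun k _ => by rw [hν k i]; try ring
  have h3 : ∑ k : Fin n, ν k i * ν j k = ∑ k : Fin n, ν i k * ν j k :=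
    Finset.sum_congr rfl fun k _ => by rw [hν k i]; try ring
  have h4 : ∑ k : Fin n, ν k j * ν i k = ∑ k : Fin n, ν i k * ν j k :=
    Finset.sum_congr rfl fun k _ => by rw [hν k j]; try ring
  have h5 : ∑ k : Fin n, ν j k * ν i k = ∑ k : Fin n, ν i k * ν j k :=
    Finset.sum_congr rfl fun k _ => by ring
  have h6 : ∑ k : Fin n, ν k i * ν k j = ∑ k : Fin n, ν i k * ν j k :=
    Finset.sum_congr rfl fun k _ => by rw [hν k i, hν k j]
  have h7 : ∑ k : Fin n, ν k j * ν k i = ∑ k : Fin n, ν i k * ν j k :=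
    Finset.sum_congr rfl fun k _ => by rw [hν k i, hν k j]; try ring
  rw [h1, h2, h3, h4, h5, h6, h7]
  have hji : ν j i = ν i j := hν j i
  rw [hji]
  match_scalars
  ring
lemma mul_stdE (T : Mat n) (hdiag : ∀ i j : Fin n, i ≠ j → T i j = 0) (i j : Fin n) :
    T * stdE i j = T i i • stdE i j := by
  ext x y
  rw [Matrix.mul_apply]
  have hsummand : ∀ k, T x k * stdE i j k y
      = if k = i then T x i * (if j = y then 1 else 0) else 0 := by
    intro k
    show T x k * (if i = k ∧ j = y then 1 else 0) = _
    split_ifs <;> subst_vars <;> simp_all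
  rw [Finset.sum_congr rfl fun k _ => hsummand k, Finset.sum_ite_eq' Finset.univ i
    (fun _ => T x i * (if j = y then 1 else 0))]
  simp only [Finset.mem_univ, if_true]
  show T x i * (if j = y then 1 else 0) = T i i * (if i = x ∧ j = y then 1 else 0)
  by_cases hx : x = i
  · subst hx
    by_cases hy : j = y <;> simp_all
  · rw [hdiag x i hx]
    have : ¬(i = x ∧ j = y) := fun h => hx h.1.symm
    simp [this]

lemma stdE_mul_diag (T : Mat n) (hdiag : ∀ i j : Fin n, i ≠ j → T i j = 0) (i j : Fin n) :
    stdE i j * T = T j j • stdE i j := by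
  ext x y
  rw [Matrix.mul_apply]
  have hsummand : ∀ k, stdE i j x k * T k y
      = if k = j then (if i = x then 1 else 0) * T j y else 0 := by
    intro k
    show (if i = x ∧ j = k then 1 else 0) * T k y = _
    split_ifs <;> subst_vars <;> simp_all
  rw [Finset.sum_congr rfl fun k _ => hsummand k, Finset.sum_ite_eq' Finset.univ j
    (fun _ => (if i = x then 1 else 0) * T j y)]
  simp only [Finset.mem_univ, if_true]
  show (if i = x then 1 else 0) * T j y = T j j * (if i = x ∧ j = y then 1 else 0)
  by_cases hy : y = j
  · subst hy
    by_cases hx : i = x <;> simp_all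
  · rw [hdiag j y (fun h => hy h.symm)]
    have : ¬(i = x ∧ j = y) := fun h => hy h.2.symm
    simp [this]

lemma wedge_eigen (T : Mat n) (hsym : Tᵀ = T) (hdiag : ∀ i j : Fin n, i ≠ j → T i j = 0)
    (a b : Fin n) :
    wedge T (1 : Mat n) (bvec a b) = ((T a a + T b b) / 2) • bvec a b := by
  apply Subtype.ext
  have lhs : ((wedge T (1 : Mat n) (bvec a b) : so n) : Mat n)
      = (1/2 : ℝ) • (T * ((bvec a b : so n) : Mat n) * (1 : Mat n)ᵀ
          + (1 : Mat n) * ((bvec a b : so n) : Mat n) * Tᵀ) := rfl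
  rw [lhs, hsym, Matrix.transpose_one, Matrix.mul_one, Matrix.one_mul]
  have rhs : ((((T a a + T b b) / 2) • bvec a b : so n) : Mat n)
      = ((T a a + T b b) / 2) • ((bvec a b : so n) : Mat n) := rfl
  rw [rhs, bvec_coe, Matrix.mul_sub, Matrix.sub_mul, mul_stdE T hdiag, mul_stdE T hdiag,
    stdE_mul_diag T hdiag, stdE_mul_diag T hdiag]
  module
lemma sum_pairs_double (f : Fin n × Fin n → so n)
    (hswap : ∀ a b : Fin n, f (b, a) = f (a, b)) (hdiag : ∀ a : Fin n, f (a, a) = 0) :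
    ∑ p : Fin n × Fin n, f p = (2 : ℝ) • ∑ p ∈ pairs n, f p := by
  classical
  have hsplit := Finset.sum_filter_add_sum_filter_not (Finset.univ : Finset (Fin n × Fin n))
    (fun p => p.1 < p.2) f
  have hsplit2 := Finset.sum_filter_add_sum_filter_not
    (Finset.univ.filter (fun p : Fin n × Fin n => ¬ p.1 < p.2)) (fun p => p.2 < p.1) f
  have hgt : (Finset.univ.filter (fun p : Fin n × Fin n => ¬ p.1 < p.2)).filter
      (fun p => p.2 < p.1) = Finset.univ.filter (fun p : Fin n × Fin n => p.2 < p.1) := by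
    ext p
    simp only [Finset.mem_filter, Finset.mem_univ, true_and]
    constructor
    · intro h
      exact h.2
    · intro h
      exact ⟨lt_asymm h, h⟩
  have hzero : ∑ p ∈ (Finset.univ.filter (fun p : Fin n × Fin n => ¬ p.1 < p.2)).filter
      (fun p => ¬ p.2 < p.1), f p = 0 := by
    apply Finset.sum_eq_zero
    intro p hp
    simp only [Finset.mem_filter, Finset.mem_univ, true_and] at hp
    obtain ⟨x, y⟩ := p
    have hxy : x = y := le_antisymm (not_lt.mp hp.2) (not_lt.mp hp.1)
    subst hxy
    exact hdiag x
  have hswapsum : ∑ p ∈ Finset.univ.filter (fun p : Fin n × Fin n => p.2 < p.1), f p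
      = ∑ p ∈ pairs n, f p := by
    refine Finset.sum_bij' (fun p _ => (p.2, p.1)) (fun p _ => (p.2, p.1)) ?_ ?_ ?_ ?_ ?_ <;>
      intro p hp <;>
      simp only [Finset.mem_filter, Finset.mem_univ, true_and, pairs] at hp ⊢ <;>
      first
        | exact hp
        | rfl
        | exact (hswap p.2 p.1).symm
        | exact hswap p.2 p.1
  rw [← hsplit]
  rw [hgt, hzero, add_zero] at hsplit2
  rw [← hsplit2, hswapsum, two_smul]
  rfl
lemma brk_neg_left (X Y : so n) : brk (-X) Y = -brk X Y := by
  apply Subtype.ext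
  show (-(X:Mat n)) * (Y:Mat n) - (Y:Mat n) * (-(X:Mat n)) = -((X:Mat n) * Y - (Y:Mat n) * X)
  noncomm_ring

lemma brk_neg_right (X Y : so n) : brk X (-Y) = -brk X Y := by
  apply Subtype.ext
  show (X:Mat n) * (-(Y:Mat n)) - (-(Y:Mat n)) * (X:Mat n) = -((X:Mat n) * Y - (Y:Mat n) * X)
  noncomm_ring

lemma brk_zero_left (Y : so n) : brk 0 Y = 0 := by
  apply Subtype.ext
  show (0:Mat n) * (Y:Mat n) - (Y:Mat n) * (0:Mat n) = 0
  simp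

lemma brk_zero_right (X : so n) : brk X 0 = 0 := by
  apply Subtype.ext
  show (X:Mat n) * (0:Mat n) - (0:Mat n) * (X:Mat n) = 0
  simp

lemma ip_neg_left (X Y : so n) : ip (-X) Y = -ip X Y := by
  simp only [ip]
  show -(1/2) * Matrix.trace ((-(X:Mat n)) * (Y:Mat n)) = _
  simp [Matrix.neg_mul]

lemma ipL_apply (A B : so n) : ipL A B = ip A B := rfl

set_option maxHeartbeats 1000000 in
lemma sharp_eig (ν : Fin n → Fin n → ℝ) (hν : ∀ a b, ν a b = ν b a)
    (R : Module.End ℝ (so n)) (hR : ∀ a b : Fin n, R (bvec a b) = ν a b • bvec a b)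
    (i j : Fin n) (hij : i ≠ j) :
    sharp R R (bvec i j)
      = ((∑ k, ν i k * ν j k) - ν i i * ν i j - ν i j * ν j j) • bvec i j := by
  classical
  set F : Fin n × Fin n → Fin n × Fin n → so n := fun p q =>
    (ν p.1 p.2 * ν q.1 q.2 * ip (brk (bvec p.1 p.2) (bvec q.1 q.2)) (bvec i j)) •
      brk (bvec p.1 p.2) (bvec q.1 q.2) with hF
  have hFswapL : ∀ (a b : Fin n) (q : Fin n × Fin n), F (b, a) q = F (a, b) q := by
    intro a b q
    simp only [hF, bvec_swap a b, brk_neg_left, ip_neg_left, smul_neg, mul_neg, neg_smul,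
      neg_neg, hν b a]
  have hFswapR : ∀ (p : Fin n × Fin n) (a b : Fin n), F p (b, a) = F p (a, b) := by
    intro p a b
    simp only [hF, bvec_swap a b, brk_neg_right, ip_neg_left, smul_neg, mul_neg, neg_smul,
      neg_neg, hν b a]
  have hFdiagL : ∀ (a : Fin n) (q : Fin n × Fin n), F (a, a) q = 0 := by
    intro a q
    simp only [hF, bvec_self, brk_zero_left, ip_zero_left, mul_zero, zero_smul, smul_zero]
  have hFdiagR : ∀ (p : Fin n × Fin n) (a : Fin n), F p (a, a) = 0 := by
    intro p a
    simp only [hF, bvec_self, brk_zero_right, ip_zero_left, mul_zero, zero_smul, smul_zero]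
  have step1 : sharp R R (bvec i j)
      = (1/4 : ℝ) • ∑ p ∈ pairs n, ∑ q ∈ pairs n, (2:ℝ) • F p q := by
    rw [sharp]
    simp only [LinearMap.smul_apply, LinearMap.sum_apply, LinearMap.add_apply,
      LinearMap.smulRight_apply, ipL_apply]
    congr 1
    apply Finset.sum_congr rfl
    intro p _
    apply Finset.sum_congr rfl
    intro q _
    rw [hR p.1 p.2, hR q.1 q.2, brk_smul_smul, ip_smul_left]
    simp only [hF, smul_smul]
    rw [← add_smul]
    congr 1
    ring
  have step2 : ∀ p : Fin n × Fin n, ∑ q ∈ pairs n, F p q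
      = (1/2 : ℝ) • ∑ q : Fin n × Fin n, F p q := by
    intro p
    rw [sum_pairs_double (F p) (fun a b => hFswapR p a b) (hFdiagR p), smul_smul]
    norm_num
  have step3 : ∑ p ∈ pairs n, ∑ q : Fin n × Fin n, F p q
      = (1/2 : ℝ) • ∑ p : Fin n × Fin n, ∑ q : Fin n × Fin n, F p q := by
    rw [sum_pairs_double (fun p => ∑ q : Fin n × Fin n, F p q)
      (fun a b => Finset.sum_congr rfl fun q _ => hFswapL a b q)
      (fun a => Finset.sum_eq_zero fun q _ => hFdiagL a q), smul_smul]
    norm_num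
  have step4 : ∑ p : Fin n × Fin n, ∑ q : Fin n × Fin n, F p q
      = (8 * (∑ k, ν i k * ν j k) - 8 * (ν i i * ν i j) - 8 * (ν i j * ν j j)) • bvec i j := by
    rw [Fintype.sum_prod_type]
    have : ∀ a b : Fin n, ∑ q : Fin n × Fin n, F (a, b) q
        = ∑ c : Fin n, ∑ d : Fin n, F (a, b) (c, d) := fun a b => Fintype.sum_prod_type _
    rw [Finset.sum_congr rfl fun a _ => Finset.sum_congr rfl fun b _ => this a b]
    exact quad_sum ν hν i j hij
  rw [step1]
  simp only [← Finset.smul_sum]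
  rw [Finset.sum_congr rfl fun p (_ : p ∈ pairs n) => step2 p]
  simp only [← Finset.smul_sum]
  rw [step3, step4]
  simp only [smul_smul]
  congr 1
  ring
/-- Eigenvalue computation for `R² + R^#` where `R = (2/(n−2))·(T ∧ id)` with `T`
traceless symmetric and diagonal. -/
theorem stmt_5 {n : ℕ} (hn : 3 ≤ n) (T : Mat n) (hsym : Tᵀ = T)
    (hdiag : ∀ i j : Fin n, i ≠ j → T i j = 0) (htr : Matrix.trace T = 0) :
    ∀ i j : Fin n, i < j →
      Qode ((2 / ((n : ℝ) - 2)) • wedge T (1 : Mat n)) (bvec i j) =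
        (T i i * T j j / ((n : ℝ) - 2)
          + ((n : ℝ) * (Matrix.trace (T * T) / (n : ℝ)) - T i i ^ 2 - T j j ^ 2)
              / ((n : ℝ) - 2) ^ 2) • bvec i j := by
  intro i j hij
  have hijne : i ≠ j := ne_of_lt hij
  have hn3 : (3:ℝ) ≤ (n:ℝ) := by exact_mod_cast hn
  have hd : ((n:ℝ) - 2) ≠ 0 := by linarith
  have hn0 : (n:ℝ) ≠ 0 := by linarith
  set ν : Fin n → Fin n → ℝ := fun a b => (T a a + T b b) / ((n:ℝ) - 2) with hνdef
  have hν : ∀ a b, ν a b = ν b a := by intro a b; simp only [hνdef]; ring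
  have hR : ∀ a b : Fin n,
      ((2 / ((n : ℝ) - 2)) • wedge T (1 : Mat n)) (bvec a b) = ν a b • bvec a b := by
    intro a b
    rw [LinearMap.smul_apply, wedge_eigen T hsym hdiag, smul_smul]
    congr 1
    simp only [hνdef]
    field_simp
  have htrace : ∑ k, T k k = 0 := htr
  have htr2 : Matrix.trace (T * T) = ∑ k, T k k ^ 2 := by
    rw [Matrix.trace]
    apply Finset.sum_congr rfl
    intro x _
    show (T * T) x x = T x x ^ 2
    rw [Matrix.mul_apply, Finset.sum_eq_single x]
    · ring
    · intro k _ hk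
      rw [hdiag x k fun h => hk h.symm, zero_mul]
    · intro h
      exact absurd (Finset.mem_univ x) h
  have hSsum : ∑ k, ν i k * ν j k
      = ((n:ℝ) * (T i i * T j j) + Matrix.trace (T * T)) / ((n:ℝ)-2)^2 := by
    have h1 : ∀ k : Fin n, ν i k * ν j k
        = (T i i * T j j + (T i i + T j j) * T k k + T k k ^ 2) / ((n:ℝ)-2)^2 := by
      intro k
      simp only [hνdef]
      field_simp
      ring
    have e1 : ∑ k : Fin n, (T i i * T j j + (T i i + T j j) * T k k + T k k ^ 2)
        = (n:ℝ) * (T i i * T j j) + (T i i + T j j) * (∑ k, T k k) + ∑ k, T k k ^ 2 := by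
      rw [Finset.sum_add_distrib, Finset.sum_add_distrib]
      congr 1
      congr 1
      · rw [Finset.sum_const, Finset.card_univ, Fintype.card_fin, nsmul_eq_mul]
      · rw [← Finset.mul_sum]
    rw [Finset.sum_congr rfl fun k _ => h1 k, ← Finset.sum_div, e1, htrace, mul_zero, add_zero,
      htr2]
  rw [Qode, LinearMap.add_apply, Module.End.mul_apply, hR i j, LinearMap.map_smul, hR i j, smul_smul,
    sharp_eig ν hν _ hR i j hijne, ← add_smul]
  congr 1
  rw [hSsum]
  simp only [hνdef]
  field_simp
  ring

end BW
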